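/- If R = A × B is a 1-monochromatic rectangle for the inner product function over GF(2)ⁿ (i.e., ⟨a,b⟩ = 1 for all a ∈ A, b ∈ B), then |A|·|B| ≤ 2^{n−1}. -/

import Mathlib

open Module Submodule

/-- The dot-product bilinear form on `Fin n → ZMod 2`. -/
noncomputable def dotForm (n : ℕ) : LinearMap.BilinForm (ZMod 2) (Fin n → ZMod 2) :=
  LinearMap.mk₂ (ZMod 2) (fun x y => ∑ i, x i * y i)
    (by intro x x' y; simp [add_mul, Finset.sum_add_distrib])
    (by intro c x y; simp [Finset.mul_sum, mul_assoc])
    (by intro x y y'; simp [mul_add, Finset.sum_add_distrib])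
    (by intro c x y; simp [Finset.mul_sum, mul_left_comm])

lemma dotForm_apply (n : ℕ) (x y : Fin n → ZMod 2) :
    dotForm n x y = ∑ i, x i * y i := rfl

lemma dotForm_refl (n : ℕ) : (dotForm n).IsRefl := by
  intro x y hxy
  simpa [dotForm_apply, mul_comm] using hxy

lemma dotForm_nondeg (n : ℕ) : (dotForm n).Nondegenerate := by
  constructor
  all_goals
    intro x hx
    funext i
    simpa [dotForm_apply, Pi.single_apply, mul_ite, ite_mul, Finset.sum_ite_eq',
      Finset.sum_ite_eq] using hx (Pi.single i 1)

/-- A 1-monochromatic rectangle for the inner product over `GF(2)ⁿ` has size at most `2^{n−1}`. -/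
theorem one_rectangle_IP_bound (n : ℕ)
    (A B : Finset (Fin n → ZMod 2))
    (h : ∀ a ∈ A, ∀ b ∈ B, ∑ i, a i * b i = 1) :
    A.card * B.card ≤ 2 ^ (n - 1) := by
  rcases A.eq_empty_or_nonempty with rfl | ⟨a₀, ha₀⟩
  · simp
  rcases B.eq_empty_or_nonempty with rfl | ⟨b₀, hb₀⟩
  · simp
  classical
  set Bf := dotForm n with hBf
  have hval : ∀ a ∈ A, ∀ b ∈ B, Bf a b = 1 := fun a ha b hb => h a ha b hb
  set U : Submodule (ZMod 2) (Fin n → ZMod 2) :=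
    span (ZMod 2) ((fun a => a - a₀) '' ↑A) with hU
  set W : Submodule (ZMod 2) (Fin n → ZMod 2) :=
    span (ZMod 2) ((fun b => b - b₀) '' ↑B) with hW
  set U' : Submodule (ZMod 2) (Fin n → ZMod 2) := U ⊔ span (ZMod 2) {a₀} with hU'
  -- a₀ ∉ U
  have hUb₀ : ∀ u ∈ U, Bf u b₀ = 0 := by
    intro u hu
    have : U ≤ LinearMap.ker (Bf.flip b₀) := by
      rw [hU, span_le]
      rintro _ ⟨a, ha, rfl⟩
      rw [SetLike.mem_coe, LinearMap.mem_ker]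
      show Bf (a - a₀) b₀ = 0
      rw [map_sub, LinearMap.sub_apply, hval a ha b₀ hb₀, hval a₀ ha₀ b₀ hb₀, sub_self]
    have := this hu
    rw [LinearMap.mem_ker] at this
    exact this
  have ha₀U : a₀ ∉ U := by
    intro hmem
    have := hUb₀ a₀ hmem
    rw [hval a₀ ha₀ b₀ hb₀] at this
    exact one_ne_zero this
  have ha₀ne : a₀ ≠ 0 := by
    intro h0
    apply ha₀U; rw [h0]; exact zero_mem U
  -- W ⊥ U'
  have hWorth : W ≤ Bf.orthogonal U' := by
    rw [hW, span_le]
    rintro _ ⟨b, hb, rfl⟩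
    intro u hu
    have : U' ≤ LinearMap.ker (Bf.flip (b - b₀)) := by
      rw [hU', sup_le_iff]
      constructor
      · rw [hU, span_le]
        rintro _ ⟨a, ha, rfl⟩
        rw [SetLike.mem_coe, LinearMap.mem_ker]
        show Bf (a - a₀) (b - b₀) = 0
        simp only [map_sub, LinearMap.sub_apply]
        rw [hval a ha b hb, hval a₀ ha₀ b hb, hval a ha b₀ hb₀, hval a₀ ha₀ b₀ hb₀]
        ring
      · rw [span_le, Set.singleton_subset_iff]
        rw [SetLike.mem_coe, LinearMap.mem_ker]
        show Bf a₀ (b - b₀) = 0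
        rw [map_sub, hval a₀ ha₀ b hb, hval a₀ ha₀ b₀ hb₀, sub_self]
    have hker := this hu
    rw [LinearMap.mem_ker] at hker
    exact hker
  -- dimensions
  have hrankU' : finrank (ZMod 2) U' = finrank (ZMod 2) U + 1 := by
    have hdisj : Disjoint U (span (ZMod 2) {a₀}) :=
      (Submodule.disjoint_span_singleton' ha₀ne).mpr ha₀U
    have := Submodule.finrank_sup_add_finrank_inf_eq U (span (ZMod 2) {a₀})
    rw [hdisj.eq_bot, finrank_bot, add_zero, finrank_span_singleton ha₀ne] at this
    exact this
  have hrankW : finrank (ZMod 2) W ≤ n - (finrank (ZMod 2) U + 1) := by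
    have h1 := LinearMap.BilinForm.finrank_orthogonal (dotForm_nondeg n) U'
    have h2 : finrank (ZMod 2) W ≤ finrank (ZMod 2) (Bf.orthogonal U') :=
      Submodule.finrank_mono hWorth
    rw [h1] at h2
    simpa [hrankU', Module.finrank_pi] using h2
  have hrankU_le : finrank (ZMod 2) U + 1 ≤ n := by
    have := Submodule.finrank_le U'
    rw [hrankU'] at this
    simpa [Module.finrank_pi] using this
  -- cardinalities
  have cardbound : ∀ (S : Finset (Fin n → ZMod 2)) (s₀ : Fin n → ZMod 2)
      (V : Submodule (ZMod 2) (Fin n → ZMod 2)),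
      V = span (ZMod 2) ((fun s => s - s₀) '' ↑S) →
      S.card ≤ 2 ^ finrank (ZMod 2) V := by
    intro S s₀ V hV
    haveI : Fintype V := Fintype.ofFinite _
    haveI : Fintype (V : Set (Fin n → ZMod 2)) := Fintype.ofFinite _
    have himg : S.image (fun s => s - s₀) ⊆ (V : Set (Fin n → ZMod 2)).toFinset := by
      intro x hx
      simp only [Finset.mem_image] at hx
      obtain ⟨s, hs, rfl⟩ := hx
      rw [Set.mem_toFinset]
      exact hV ▸ subset_span ⟨s, hs, rfl⟩
    have hinj : (S.image (fun s => s - s₀)).card = S.card :=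
      Finset.card_image_of_injective _ (sub_left_injective)
    calc S.card = (S.image (fun s => s - s₀)).card := hinj.symm
      _ ≤ (V : Set (Fin n → ZMod 2)).toFinset.card := Finset.card_le_card himg
      _ = Fintype.card V := Set.toFinset_card _
      _ = 2 ^ finrank (ZMod 2) V := by
          rw [card_eq_pow_finrank (K := ZMod 2)]; norm_num
  have hA : A.card ≤ 2 ^ finrank (ZMod 2) U := cardbound A a₀ U hU
  have hB : B.card ≤ 2 ^ finrank (ZMod 2) W := cardbound B b₀ W hW
  calc A.card * B.card ≤ 2 ^ finrank (ZMod 2) U * 2 ^ finrank (ZMod 2) W :=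
        Nat.mul_le_mul hA hB
    _ = 2 ^ (finrank (ZMod 2) U + finrank (ZMod 2) W) := (pow_add 2 _ _).symm
    _ ≤ 2 ^ (n - 1) := Nat.pow_le_pow_right (by norm_num) (by omega)
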